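/- For every t with 0 < t < 1/2 and every z ∈ ℂ with Im z ≥ −t and z ≠ −ti, the analytic extension of the Meixner Cauchy transform has no zero: Φ_t(z) := 1/(z + ti) + (it/(z + ti))·G_{t+1/2}(z + i/2) ≠ 0. -/

import Mathlib

open MeasureTheory

/-- The density of the symmetric Meixner distribution `ρ_s`. -/
noncomputable def meixnerDensity (s x : ℝ) : ℝ :=
  (4 : ℝ) ^ s / (2 * Real.pi * Real.Gamma (2 * s)) *
    ‖Complex.Gamma ((s : ℂ) + (x : ℂ) * Complex.I)‖ ^ 2

lemma meixnerDensity_nonneg (s x : ℝ) (hs : 0 < s) : 0 ≤ meixnerDensity s x := by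
  have hG : 0 < Real.Gamma (2 * s) := Real.Gamma_pos_of_pos (by linarith)
  have hpi := Real.pi_pos
  unfold meixnerDensity
  positivity

/-- The analytic extension `Φ_t(z) = 1/(z+ti) + (it/(z+ti))·G_{t+1/2}(z + i/2)` of the
Cauchy transform of the symmetric Meixner distribution `ρ_t`. -/
noncomputable def meixnerPhi (t : ℝ) (z : ℂ) : ℂ :=
  1 / (z + (t : ℂ) * Complex.I) +
    (Complex.I * (t : ℂ) / (z + (t : ℂ) * Complex.I)) *
      ∫ u : ℝ, (meixnerDensity (t + 1 / 2) u : ℂ) / ((z + Complex.I / 2) - (u : ℂ))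

/-- For `0 < t < 1/2`, the analytic extension of the Meixner Cauchy transform has no zero
in the closed half-plane `{Im z ≥ −t}` away from the pole `−ti`. -/
theorem meixner_extension_ne_zero (t : ℝ) (ht0 : 0 < t) (ht : t < 1 / 2)
    (z : ℂ) (hz : -t ≤ z.im) (hz' : z ≠ -(t : ℂ) * Complex.I) :
    meixnerPhi t z ≠ 0 := by
  set f : ℝ → ℂ := fun u => (meixnerDensity (t + 1 / 2) u : ℂ) / ((z + Complex.I / 2) - (u : ℂ))
    with hf
  set G : ℂ := ∫ u : ℝ, f u with hGdef
  have him : 0 < (z + Complex.I / 2).im := by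
    simp [Complex.add_im, Complex.div_im]
    linarith
  have hfim : ∀ u : ℝ, (f u).im ≤ 0 := by
    intro u
    have hd : 0 ≤ ((z + Complex.I / 2) - (u : ℂ)).im := by
      simp [Complex.sub_im]
      linarith [him]
    have hρ : 0 ≤ meixnerDensity (t + 1 / 2) u :=
      meixnerDensity_nonneg _ _ (by linarith)
    rw [hf]
    simp only [div_eq_mul_inv, Complex.mul_im, Complex.ofReal_re, Complex.ofReal_im,
      zero_mul, add_zero, Complex.inv_im]
    apply mul_nonpos_of_nonneg_of_nonpos hρ
    apply div_nonpos_of_nonpos_of_nonneg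
    · simp only [div_eq_mul_inv] at hd; linarith
    · exact Complex.normSq_nonneg _
  have hGim : G.im ≤ 0 := by
    by_cases hint : Integrable f
    · have h1 := integral_im (μ := volume) (𝕜 := ℂ) hint
      have h2 : G.im = ∫ u : ℝ, (f u).im := by
        rw [hGdef]; simpa using h1.symm
      rw [h2]
      exact integral_nonpos hfim
    · rw [hGdef, integral_undef hint]
      simp
  have hden : z + (t : ℂ) * Complex.I ≠ 0 := by
    intro h
    apply hz'
    linear_combination h
  intro h
  rw [meixnerPhi] at h
  have h2 : (1 + Complex.I * (t : ℂ) * G) / (z + (t : ℂ) * Complex.I) = 0 := by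
    rw [hGdef, hf]
    rw [← h]
    ring
  have h2' : 1 + Complex.I * (t : ℂ) * G = 0 :=
    (div_eq_zero_iff.mp h2).resolve_right hden
  have h3 := congrArg Complex.re h2'
  simp [Complex.add_re, Complex.mul_re, Complex.mul_im] at h3
  nlinarith [hGim, ht0]
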